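/- Let 0 < p < 1, μ_1, μ_2 ∈ ℝ and σ_1, σ_2 > 0. Let φ_1 and φ_2 be the densities of N(μ_1, σ_1^2) and N(μ_2, σ_2^2), let q = 1 − p, let ρ(x) = p·φ_1(x) + q·φ_2(x), let μ = p·μ_1 + q·μ_2, and define τ(x) = (1/ρ(x))·∫_x^∞ (y − μ)·ρ(y) dy for x ∈ ℝ. Then τ is bounded: sup_{x∈ℝ} |τ(x)| ≤ C, where C is a constant depending only on p, μ_1, σ_1^2, μ_2, σ_2^2. (This τ is the Stein kernel of the two-component Gaussian mixture Y with density ρ.) -/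

import Mathlib

open MeasureTheory

/-- The density of the normal distribution `N(m, s²)`. -/
noncomputable def gaussDensity (m s x : ℝ) : ℝ :=
  (Real.sqrt (2 * Real.pi * s ^ 2))⁻¹ * Real.exp (-(x - m) ^ 2 / (2 * s ^ 2))

open Real Set Filter

variable {m s c x : ℝ}

lemma gd_pos (hs : 0 < s) (m x : ℝ) : 0 < gaussDensity m s x := by
  have h2 : 0 < 2 * Real.pi * s ^ 2 := by positivity
  exact mul_pos (inv_pos.mpr (Real.sqrt_pos.mpr h2)) (Real.exp_pos _)

lemma gd_eq (hs : 0 < s) (m x : ℝ) :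
    gaussDensity m s x
      = (Real.sqrt (2 * Real.pi * s ^ 2))⁻¹ * Real.exp (-(1/(2*s^2)) * (x - m) ^ 2) := by
  have : -(x - m) ^ 2 / (2 * s ^ 2) = -(1/(2*s^2)) * (x - m) ^ 2 := by
    field_simp
  rw [gaussDensity, this]

lemma gd_integrable (hs : 0 < s) (m : ℝ) : Integrable (gaussDensity m s) := by
  have hb : 0 < 1/(2*s^2) := by positivity
  have h := ((integrable_exp_neg_mul_sq hb).comp_sub_right m).const_mul
    ((Real.sqrt (2 * Real.pi * s ^ 2))⁻¹)
  refine h.congr (Filter.Eventually.of_forall fun x => ?_)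
  rw [gd_eq hs]

lemma gd_mul_integrable (hs : 0 < s) (m c : ℝ) :
    Integrable (fun y => (y - c) * gaussDensity m s y) := by
  have hb : 0 < 1/(2*s^2) := by positivity
  have h1 : Integrable (fun y : ℝ => (y - m) * gaussDensity m s y) := by
    have h := (((integrable_mul_exp_neg_mul_sq hb).const_mul
      ((Real.sqrt (2 * Real.pi * s ^ 2))⁻¹)).comp_sub_right m)
    refine h.congr (Filter.Eventually.of_forall fun x => ?_)
    simp only
    rw [gd_eq hs]; ring
  have h2 := (gd_integrable hs m).const_mul (m - c)
  refine (h1.add h2).congr (Filter.Eventually.of_forall fun x => ?_)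
  simp only [Pi.add_apply]; ring

lemma gd_hasDerivAt (hs : 0 < s) (m y : ℝ) :
    HasDerivAt (fun y => -s^2 * gaussDensity m s y) ((y - m) * gaussDensity m s y) y := by
  have hg : HasDerivAt (fun y : ℝ => -(y - m) ^ 2 / (2 * s ^ 2)) (-(y-m)/s^2) y := by
    have : HasDerivAt (fun y : ℝ => -(y - m) ^ 2 / (2 * s ^ 2))
        ((-(2*(y-m)^1*1)) / (2*s^2)) y :=
      (((hasDerivAt_id y).sub_const m).pow 2).neg.div_const _
    convert this using 1
    field_simp
  have h := (hg.exp).const_mul (-s^2 * (Real.sqrt (2 * Real.pi * s ^ 2))⁻¹)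
  have hfun : (fun y => -s^2 * gaussDensity m s y)
      = (fun y => -s^2 * (Real.sqrt (2 * Real.pi * s ^ 2))⁻¹
          * Real.exp (-(y - m) ^ 2 / (2 * s ^ 2))) := by
    funext y; rw [gaussDensity]; ring
  have hval : (y - m) * gaussDensity m s y
      = -s^2 * (Real.sqrt (2 * Real.pi * s ^ 2))⁻¹
          * (Real.exp (-(y - m) ^ 2 / (2 * s ^ 2)) * (-(y-m)/s^2)) := by
    rw [gaussDensity]; field_simp
  rw [hfun, hval]; exact h

lemma gd_tendsto_zero (hs : 0 < s) (m : ℝ) {l : Filter ℝ}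
    (h : Tendsto (fun y => (y - m)^2) l atTop) :
    Tendsto (fun y => -s^2 * gaussDensity m s y) l (nhds 0) := by
  have h1 : Tendsto (fun y : ℝ => -(y - m) ^ 2 / (2 * s ^ 2)) l atBot := by
    apply Tendsto.atBot_div_const (by positivity)
    exact tendsto_neg_atBot_iff.mpr h
  have h2 : Tendsto (fun y => gaussDensity m s y) l (nhds 0) := by
    have := (Real.tendsto_exp_atBot.comp h1).const_mul ((Real.sqrt (2 * Real.pi * s ^ 2))⁻¹)
    simpa [gaussDensity, Function.comp] using this
  simpa using h2.const_mul (-s^2)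

lemma gd_moment_Ioi (hs : 0 < s) (m x : ℝ) :
    ∫ y in Ioi x, (y - m) * gaussDensity m s y = s^2 * gaussDensity m s x := by
  have htop : Tendsto (fun y : ℝ => (y - m)^2) atTop atTop := by
    exact (tendsto_pow_atTop (by norm_num)).comp (tendsto_atTop_add_const_right _ (-m) tendsto_id)
  have := integral_Ioi_of_hasDerivAt_of_tendsto' (a := x) (m := 0)
    (f := fun y => -s^2 * gaussDensity m s y)
    (f' := fun y => (y - m) * gaussDensity m s y) (fun y _ => gd_hasDerivAt hs m y)
    ((gd_mul_integrable hs m m).integrableOn) (gd_tendsto_zero hs m htop)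
  rw [this]; ring

lemma gd_moment_Iic (hs : 0 < s) (m x : ℝ) :
    ∫ y in Iic x, (m - y) * gaussDensity m s y = s^2 * gaussDensity m s x := by
  have hbot : Tendsto (fun y : ℝ => (y - m)^2) atBot atTop := by
    have h0 : Tendsto (fun y : ℝ => y - m) atBot atBot :=
      tendsto_atBot_add_const_right _ (-m) tendsto_id
    have h1 : Tendsto (fun y : ℝ => -(y - m)) atBot atTop := tendsto_neg_atBot_atTop.comp h0
    have h2 := (tendsto_pow_atTop (n := 2) (by norm_num)).comp h1
    refine h2.congr fun y => ?_
    simp only [Function.comp]; ring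
  have := integral_Iic_of_hasDerivAt_of_tendsto' (a := x) (m := 0)
    (f := fun y => -s^2 * gaussDensity m s y)
    (f' := fun y => (y - m) * gaussDensity m s y) (fun y _ => gd_hasDerivAt hs m y)
    ((gd_mul_integrable hs m m).integrableOn) (gd_tendsto_zero hs m hbot)
  have h2 : ∫ y in Iic x, (m - y) * gaussDensity m s y
      = -∫ y in Iic x, (y - m) * gaussDensity m s y := by
    rw [← integral_neg]; congr 1; funext y; ring
  rw [h2, this]; ring

lemma gd_integral_one (hs : 0 < s) (m : ℝ) : ∫ y, gaussDensity m s y = 1 := by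
  have hv : (⟨s^2, sq_nonneg s⟩ : NNReal) ≠ 0 := by
    intro h
    have h2 := congrArg (fun t : NNReal => (t : ℝ)) h
    change s^2 = (0:ℝ) at h2
    exact absurd h2 (by positivity)
  have h := ProbabilityTheory.integral_gaussianPDFReal_eq_one m hv
  have hfun : gaussDensity m s = ProbabilityTheory.gaussianPDFReal m ⟨s^2, sq_nonneg s⟩ := by
    funext y
    rw [gaussDensity]; unfold ProbabilityTheory.gaussianPDFReal
    rfl
  rw [hfun]; exact h

lemma gd_tail_Ioi (hs : 0 < s) (hx : m ≤ x) :
    ∫ y in Ioi x, gaussDensity m s y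
      ≤ Real.sqrt (2 * Real.pi * s ^ 2) * gaussDensity m s x := by
  set E : ℝ := Real.exp (-(x - m) ^ 2 / (2 * s ^ 2)) with hE
  have hEpos : 0 < E := Real.exp_pos _
  have key : ∀ y ∈ Ioi x, gaussDensity m s y ≤ E * gaussDensity x s y := by
    intro y hy
    have hy' : x ≤ y := le_of_lt hy
    have hsum : (x - m)^2 + (y - x)^2 ≤ (y - m)^2 := by nlinarith
    have hexp : Real.exp (-(y - m) ^ 2 / (2 * s ^ 2))
        ≤ E * Real.exp (-(y - x) ^ 2 / (2 * s ^ 2)) := by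
      rw [hE, ← Real.exp_add]
      apply Real.exp_le_exp.mpr
      rw [← add_div]
      apply div_le_div_of_nonneg_right ?_ (by positivity)
      · linarith
    calc gaussDensity m s y
        = (Real.sqrt (2 * Real.pi * s ^ 2))⁻¹ * Real.exp (-(y - m) ^ 2 / (2 * s ^ 2)) := rfl
      _ ≤ (Real.sqrt (2 * Real.pi * s ^ 2))⁻¹ * (E * Real.exp (-(y - x) ^ 2 / (2 * s ^ 2))) := by
          apply mul_le_mul_of_nonneg_left hexp (by positivity)
      _ = E * gaussDensity x s y := by rw [gaussDensity]; ring
  have h1 : ∫ y in Ioi x, gaussDensity m s y ≤ ∫ y in Ioi x, E * gaussDensity x s y := by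
    apply setIntegral_mono_on (gd_integrable hs m).integrableOn
      ((gd_integrable hs x).const_mul E).integrableOn measurableSet_Ioi key
  have h2 : ∫ y in Ioi x, E * gaussDensity x s y ≤ ∫ y, E * gaussDensity x s y := by
    apply setIntegral_le_integral ((gd_integrable hs x).const_mul E)
    exact Filter.Eventually.of_forall fun y => mul_nonneg hEpos.le (gd_pos hs x y).le
  have h3 : ∫ y, E * gaussDensity x s y = E := by
    rw [MeasureTheory.integral_const_mul, gd_integral_one hs x, mul_one]
  have h4 : E = Real.sqrt (2 * Real.pi * s ^ 2) * gaussDensity m s x := by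
    rw [gaussDensity, ← mul_assoc, mul_inv_cancel₀ (by positivity), one_mul]
  linarith

lemma gd_tail_Iic (hs : 0 < s) (hx : x ≤ m) :
    ∫ y in Iic x, gaussDensity m s y
      ≤ Real.sqrt (2 * Real.pi * s ^ 2) * gaussDensity m s x := by
  set E : ℝ := Real.exp (-(x - m) ^ 2 / (2 * s ^ 2)) with hE
  have hEpos : 0 < E := Real.exp_pos _
  have key : ∀ y ∈ Iic x, gaussDensity m s y ≤ E * gaussDensity x s y := by
    intro y hy
    have hy' : y ≤ x := hy
    have hsum : (x - m)^2 + (y - x)^2 ≤ (y - m)^2 := by nlinarith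
    have hexp : Real.exp (-(y - m) ^ 2 / (2 * s ^ 2))
        ≤ E * Real.exp (-(y - x) ^ 2 / (2 * s ^ 2)) := by
      rw [hE, ← Real.exp_add]
      apply Real.exp_le_exp.mpr
      rw [← add_div]
      apply div_le_div_of_nonneg_right ?_ (by positivity)
      · linarith
    calc gaussDensity m s y
        = (Real.sqrt (2 * Real.pi * s ^ 2))⁻¹ * Real.exp (-(y - m) ^ 2 / (2 * s ^ 2)) := rfl
      _ ≤ (Real.sqrt (2 * Real.pi * s ^ 2))⁻¹ * (E * Real.exp (-(y - x) ^ 2 / (2 * s ^ 2))) := by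
          apply mul_le_mul_of_nonneg_left hexp (by positivity)
      _ = E * gaussDensity x s y := by rw [gaussDensity]; ring
  have h1 : ∫ y in Iic x, gaussDensity m s y ≤ ∫ y in Iic x, E * gaussDensity x s y := by
    apply setIntegral_mono_on (gd_integrable hs m).integrableOn
      ((gd_integrable hs x).const_mul E).integrableOn measurableSet_Iic key
  have h2 : ∫ y in Iic x, E * gaussDensity x s y ≤ ∫ y, E * gaussDensity x s y := by
    apply setIntegral_le_integral ((gd_integrable hs x).const_mul E)
    exact Filter.Eventually.of_forall fun y => mul_nonneg hEpos.le (gd_pos hs x y).le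
  have h3 : ∫ y, E * gaussDensity x s y = E := by
    rw [MeasureTheory.integral_const_mul, gd_integral_one hs x, mul_one]
  have h4 : E = Real.sqrt (2 * Real.pi * s ^ 2) * gaussDensity m s x := by
    rw [gaussDensity, ← mul_assoc, mul_inv_cancel₀ (by positivity), one_mul]
  linarith

lemma gd_moment_Ioi_c (hs : 0 < s) (m c x : ℝ) :
    ∫ y in Ioi x, (y - c) * gaussDensity m s y
      = s^2 * gaussDensity m s x + (m - c) * ∫ y in Ioi x, gaussDensity m s y := by
  have h1 : ∫ y in Ioi x, (y - c) * gaussDensity m s y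
      = (∫ y in Ioi x, (y - m) * gaussDensity m s y)
        + ∫ y in Ioi x, (m - c) * gaussDensity m s y := by
    rw [← integral_add (gd_mul_integrable hs m m).integrableOn
      (((gd_integrable hs m).const_mul (m - c)).integrableOn)]
    apply setIntegral_congr_fun measurableSet_Ioi
    intro y _; simp only; ring
  rw [h1, gd_moment_Ioi hs, MeasureTheory.integral_const_mul]

lemma gd_moment_Iic_c (hs : 0 < s) (m c x : ℝ) :
    ∫ y in Iic x, (c - y) * gaussDensity m s y
      = s^2 * gaussDensity m s x + (c - m) * ∫ y in Iic x, gaussDensity m s y := by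
  have h1 : ∫ y in Iic x, (c - y) * gaussDensity m s y
      = (∫ y in Iic x, (m - y) * gaussDensity m s y)
        + ∫ y in Iic x, (c - m) * gaussDensity m s y := by
    rw [← integral_add]
    · apply setIntegral_congr_fun measurableSet_Iic
      intro y _; simp only; ring
    · have := ((gd_mul_integrable hs m m).neg).integrableOn (s := Iic x)
      refine this.congr_fun ?_ measurableSet_Iic
      intro y _; simp only [Pi.neg_apply]; ring
    · exact ((gd_integrable hs m).const_mul (c - m)).integrableOn
  rw [h1, gd_moment_Iic hs, MeasureTheory.integral_const_mul]

lemma gd_tail_Ioi_nonneg (hs : 0 < s) (m x : ℝ) :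
    0 ≤ ∫ y in Ioi x, gaussDensity m s y :=
  setIntegral_nonneg measurableSet_Ioi fun y _ => (gd_pos hs m y).le

lemma gd_tail_Iic_nonneg (hs : 0 < s) (m x : ℝ) :
    0 ≤ ∫ y in Iic x, gaussDensity m s y :=
  setIntegral_nonneg measurableSet_Iic fun y _ => (gd_pos hs m y).le

lemma gd_num_Ioi_bound (hs : 0 < s) (hx : m ≤ x) (c : ℝ) :
    ∫ y in Ioi x, (y - c) * gaussDensity m s y
      ≤ (s^2 + |m - c| * Real.sqrt (2 * Real.pi * s ^ 2)) * gaussDensity m s x := by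
  rw [gd_moment_Ioi_c hs]
  have hT := gd_tail_Ioi hs hx
  have hT0 := gd_tail_Ioi_nonneg hs m x
  have h1 : (m - c) * ∫ y in Ioi x, gaussDensity m s y
      ≤ |m - c| * (Real.sqrt (2 * Real.pi * s ^ 2) * gaussDensity m s x) := by
    calc (m - c) * ∫ y in Ioi x, gaussDensity m s y
        ≤ |m - c| * ∫ y in Ioi x, gaussDensity m s y :=
          mul_le_mul_of_nonneg_right (le_abs_self _) hT0
      _ ≤ |m - c| * (Real.sqrt (2 * Real.pi * s ^ 2) * gaussDensity m s x) :=
          mul_le_mul_of_nonneg_left hT (abs_nonneg _)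
    
  nlinarith [gd_pos hs m x]

lemma gd_num_Iic_bound (hs : 0 < s) (hx : x ≤ m) (c : ℝ) :
    ∫ y in Iic x, (c - y) * gaussDensity m s y
      ≤ (s^2 + |c - m| * Real.sqrt (2 * Real.pi * s ^ 2)) * gaussDensity m s x := by
  rw [gd_moment_Iic_c hs]
  have hT := gd_tail_Iic hs hx
  have hT0 := gd_tail_Iic_nonneg hs m x
  have h1 : (c - m) * ∫ y in Iic x, gaussDensity m s y
      ≤ |c - m| * (Real.sqrt (2 * Real.pi * s ^ 2) * gaussDensity m s x) := by
    calc (c - m) * ∫ y in Iic x, gaussDensity m s y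
        ≤ |c - m| * ∫ y in Iic x, gaussDensity m s y :=
          mul_le_mul_of_nonneg_right (le_abs_self _) hT0
      _ ≤ |c - m| * (Real.sqrt (2 * Real.pi * s ^ 2) * gaussDensity m s x) :=
          mul_le_mul_of_nonneg_left hT (abs_nonneg _)
  nlinarith [gd_pos hs m x]

lemma gd_mean (hs : 0 < s) (m c : ℝ) :
    ∫ y, (y - c) * gaussDensity m s y = m - c := by
  have hsplit := intervalIntegral.integral_Iic_add_Ioi (b := m) (f := fun y => (y - c) * gaussDensity m s y)
    (gd_mul_integrable hs m c).integrableOn (gd_mul_integrable hs m c).integrableOn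
  have hIic : ∫ y in Iic m, (y - c) * gaussDensity m s y
      = -(s^2 * gaussDensity m s m) + (m - c) * ∫ y in Iic m, gaussDensity m s y := by
    have h := gd_moment_Iic_c hs m c m
    have h2 : ∫ y in Iic m, (y - c) * gaussDensity m s y
        = -∫ y in Iic m, (c - y) * gaussDensity m s y := by
      rw [← integral_neg]
      apply setIntegral_congr_fun measurableSet_Iic
      intro y _; simp only [Pi.neg_apply]; ring
    rw [h2, h]; ring
  have hIoi := gd_moment_Ioi_c hs m c m
  have hone : (∫ y in Iic m, gaussDensity m s y) + ∫ y in Ioi m, gaussDensity m s y = 1 := by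
    rw [intervalIntegral.integral_Iic_add_Ioi (gd_integrable hs m).integrableOn
      (gd_integrable hs m).integrableOn, gd_integral_one hs m]
  rw [← hsplit, hIic, hIoi]
  linear_combination (m - c) * hone


set_option maxHeartbeats 1000000 in
/-- **Boundedness of the Stein kernel of a two-component Gaussian mixture.**
Let `0 < p < 1`, `σ₁, σ₂ > 0`, let `ρ = p φ₁ + (1 - p) φ₂` be the density of the mixture of
`N(μ₁, σ₁²)` and `N(μ₂, σ₂²)`, `μ = p μ₁ + (1 - p) μ₂` its mean, and let
`τ(x) = ρ(x)⁻¹ ∫_x^∞ (y - μ) ρ(y) dy` be its Stein kernel. Then `τ` is bounded by a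
constant depending only on `p, μ₁, σ₁², μ₂, σ₂²`. -/
theorem gaussian_mixture_stein_kernel_bounded
    (p : ℝ) (hp0 : 0 < p) (hp1 : p < 1)
    (μ₁ μ₂ σ₁ σ₂ : ℝ) (hσ₁ : 0 < σ₁) (hσ₂ : 0 < σ₂) :
    ∃ C : ℝ, ∀ x : ℝ,
      |(p * gaussDensity μ₁ σ₁ x + (1 - p) * gaussDensity μ₂ σ₂ x)⁻¹ *
          ∫ y in Set.Ioi x,
            (y - (p * μ₁ + (1 - p) * μ₂)) *
              (p * gaussDensity μ₁ σ₁ y + (1 - p) * gaussDensity μ₂ σ₂ y)|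
        ≤ C := by
  have hq0 : 0 < 1 - p := by linarith
  set μ : ℝ := p * μ₁ + (1 - p) * μ₂ with hμ
  set φ₁ : ℝ → ℝ := gaussDensity μ₁ σ₁ with hφ₁
  set φ₂ : ℝ → ℝ := gaussDensity μ₂ σ₂ with hφ₂
  set ρ : ℝ → ℝ := fun y => p * φ₁ y + (1 - p) * φ₂ y with hρ
  have hρpos : ∀ x, 0 < ρ x := fun x =>
    add_pos (mul_pos hp0 (gd_pos hσ₁ μ₁ x)) (mul_pos hq0 (gd_pos hσ₂ μ₂ x))
  set f : ℝ → ℝ := fun y => (y - μ) * ρ y with hf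
  have hfi : Integrable f := by
    have h := ((gd_mul_integrable hσ₁ μ₁ μ).const_mul p).add
      ((gd_mul_integrable hσ₂ μ₂ μ).const_mul (1 - p))
    refine h.congr (Filter.Eventually.of_forall fun y => ?_)
    simp only [hf, hρ, Pi.add_apply]; ring
  -- constants
  set K₁ : ℝ := σ₁^2 + |μ₁ - μ| * Real.sqrt (2 * Real.pi * σ₁ ^ 2) with hK₁
  set K₂ : ℝ := σ₂^2 + |μ₂ - μ| * Real.sqrt (2 * Real.pi * σ₂ ^ 2) with hK₂
  set K : ℝ := max K₁ K₂ with hK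
  set m0 : ℝ := min μ (min μ₁ μ₂) with hm0
  set M0 : ℝ := max μ (max μ₁ μ₂) with hM0
  set clow : ℝ := p * ((Real.sqrt (2 * Real.pi * σ₁ ^ 2))⁻¹
    * Real.exp (-(M0 - m0)^2 / (2 * σ₁^2))) with hclow
  have hclowpos : 0 < clow := by
    apply mul_pos hp0
    have : (0:ℝ) < 2 * Real.pi * σ₁ ^ 2 := by positivity
    exact mul_pos (inv_pos.mpr (Real.sqrt_pos.mpr this)) (Real.exp_pos _)
  set A : ℝ := ∫ y, |f y| with hA
  have hA0 : 0 ≤ A := integral_nonneg fun y => abs_nonneg _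
  refine ⟨max K (A / clow), fun x => ?_⟩
  -- key claim
  have key : |∫ y in Ioi x, f y| ≤ max K (A / clow) * ρ x := by
    have hsplitIoi : ∫ y in Ioi x, f y
        = p * (∫ y in Ioi x, (y - μ) * φ₁ y) + (1 - p) * ∫ y in Ioi x, (y - μ) * φ₂ y := by
      rw [← MeasureTheory.integral_const_mul, ← MeasureTheory.integral_const_mul,
        ← integral_add (((gd_mul_integrable hσ₁ μ₁ μ).const_mul p).integrableOn)
          (((gd_mul_integrable hσ₂ μ₂ μ).const_mul (1 - p)).integrableOn)]
      apply setIntegral_congr_fun measurableSet_Ioi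
      intro y _; simp only [hf, hρ, Pi.add_apply]; ring
    rcases le_or_gt M0 x with hright | h1
    · -- right tail
      have hxμ : μ ≤ x := le_trans (le_max_left _ _) hright
      have hxμ₁ : μ₁ ≤ x := le_trans (le_trans (le_max_left _ _) (le_max_right _ _)) hright
      have hxμ₂ : μ₂ ≤ x := le_trans (le_trans (le_max_right _ _) (le_max_right _ _)) hright
      have hpos : 0 ≤ ∫ y in Ioi x, f y := by
        apply setIntegral_nonneg measurableSet_Ioi
        intro y hy
        have : (0:ℝ) ≤ y - μ := by
          have := le_of_lt (mem_Ioi.mp hy); linarith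
        exact mul_nonneg this (hρpos y).le
      rw [abs_of_nonneg hpos, hsplitIoi]
      have hb1 := gd_num_Ioi_bound hσ₁ hxμ₁ μ
      have hb2 := gd_num_Ioi_bound hσ₂ hxμ₂ μ
      have hKK₁ : K₁ ≤ max K (A / clow) := le_trans (le_max_left _ _) (le_max_left _ _)
      have hKK₂ : K₂ ≤ max K (A / clow) := le_trans (le_max_right _ _) (le_max_left _ _)
      have hg1 := (gd_pos hσ₁ μ₁ x).le
      have hg2 := (gd_pos hσ₂ μ₂ x).le
      calc p * (∫ y in Ioi x, (y - μ) * φ₁ y) + (1 - p) * ∫ y in Ioi x, (y - μ) * φ₂ y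
          ≤ p * (K₁ * φ₁ x) + (1 - p) * (K₂ * φ₂ x) := by
            apply add_le_add
            · exact mul_le_mul_of_nonneg_left hb1 hp0.le
            · exact mul_le_mul_of_nonneg_left hb2 hq0.le
        _ ≤ max K (A / clow) * ρ x := by
            simp only [hρ]
            nlinarith [mul_le_mul_of_nonneg_right hKK₁ hg1, mul_le_mul_of_nonneg_right hKK₂ hg2]
    rcases le_or_gt x m0 with hleft | h2
    · -- left tail
      have hxμ : x ≤ μ := le_trans hleft (min_le_left _ _)
      have hxμ₁ : x ≤ μ₁ := le_trans hleft (le_trans (min_le_right _ _) (min_le_left _ _))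
      have hxμ₂ : x ≤ μ₂ := le_trans hleft (le_trans (min_le_right _ _) (min_le_right _ _))
      have htot : (∫ y in Iic x, f y) + ∫ y in Ioi x, f y = 0 := by
        rw [intervalIntegral.integral_Iic_add_Ioi hfi.integrableOn hfi.integrableOn]
        have hsplit : ∫ y, f y
            = p * (∫ y, (y - μ) * φ₁ y) + (1 - p) * ∫ y, (y - μ) * φ₂ y := by
          rw [← MeasureTheory.integral_const_mul, ← MeasureTheory.integral_const_mul,
            ← integral_add ((gd_mul_integrable hσ₁ μ₁ μ).const_mul p)
              ((gd_mul_integrable hσ₂ μ₂ μ).const_mul (1 - p))]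
          apply integral_congr_ae (Filter.Eventually.of_forall fun y => ?_)
          simp only [hf, hρ, Pi.add_apply]; ring
        rw [hsplit, gd_mean hσ₁ μ₁ μ, gd_mean hσ₂ μ₂ μ, hμ]; ring
      have hflip : ∫ y in Ioi x, f y = ∫ y in Iic x, (μ - y) * ρ y := by
        have : ∫ y in Iic x, (μ - y) * ρ y = -∫ y in Iic x, f y := by
          rw [← integral_neg]
          apply setIntegral_congr_fun measurableSet_Iic
          intro y _; simp only [hf, Pi.neg_apply]; ring
        rw [this]; linarith
      have hpos : 0 ≤ ∫ y in Ioi x, f y := by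
        rw [hflip]
        apply setIntegral_nonneg measurableSet_Iic
        intro y hy
        have : (0:ℝ) ≤ μ - y := by
          have := mem_Iic.mp hy; linarith
        exact mul_nonneg this (hρpos y).le
      rw [abs_of_nonneg hpos, hflip]
      have hsplitIic : ∫ y in Iic x, (μ - y) * ρ y
          = p * (∫ y in Iic x, (μ - y) * φ₁ y) + (1 - p) * ∫ y in Iic x, (μ - y) * φ₂ y := by
        rw [← MeasureTheory.integral_const_mul, ← MeasureTheory.integral_const_mul,
          ← integral_add ((((gd_mul_integrable hσ₁ μ₁ μ).neg).const_mul p).integrableOn.congr_fun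
              (fun y _ => by simp only [Pi.neg_apply]; ring) measurableSet_Iic)
            ((((gd_mul_integrable hσ₂ μ₂ μ).neg).const_mul (1 - p)).integrableOn.congr_fun
              (fun y _ => by simp only [Pi.neg_apply]; ring) measurableSet_Iic)]
        apply setIntegral_congr_fun measurableSet_Iic
        intro y _; simp only [hρ, Pi.add_apply]; ring
      rw [hsplitIic]
      have hb1 := gd_num_Iic_bound hσ₁ hxμ₁ μ
      have hb2 := gd_num_Iic_bound hσ₂ hxμ₂ μ
      rw [abs_sub_comm μ μ₁] at hb1
      rw [abs_sub_comm μ μ₂] at hb2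
      have hKK₁ : K₁ ≤ max K (A / clow) := le_trans (le_max_left _ _) (le_max_left _ _)
      have hKK₂ : K₂ ≤ max K (A / clow) := le_trans (le_max_right _ _) (le_max_left _ _)
      have hg1 := (gd_pos hσ₁ μ₁ x).le
      have hg2 := (gd_pos hσ₂ μ₂ x).le
      calc p * (∫ y in Iic x, (μ - y) * φ₁ y) + (1 - p) * ∫ y in Iic x, (μ - y) * φ₂ y
          ≤ p * (K₁ * φ₁ x) + (1 - p) * (K₂ * φ₂ x) := by
            apply add_le_add
            · exact mul_le_mul_of_nonneg_left hb1 hp0.le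
            · exact mul_le_mul_of_nonneg_left hb2 hq0.le
        _ ≤ max K (A / clow) * ρ x := by
            simp only [hρ]
            nlinarith [mul_le_mul_of_nonneg_right hKK₁ hg1, mul_le_mul_of_nonneg_right hKK₂ hg2]
    · -- middle
      have hmm : m0 ≤ M0 := le_trans (min_le_left _ _) (le_max_left _ _)
      have hμ₁m : m0 ≤ μ₁ := le_trans (min_le_right _ _) (min_le_left _ _)
      have hμ₁M : μ₁ ≤ M0 := le_trans (le_max_left _ _) (le_max_right _ _)
      have habs : |∫ y in Ioi x, f y| ≤ A := by
        calc |∫ y in Ioi x, f y| ≤ ∫ y in Ioi x, |f y| := by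
              simpa [Real.norm_eq_abs] using
                norm_integral_le_integral_norm (μ := volume.restrict (Ioi x)) f
          _ ≤ A := setIntegral_le_integral hfi.abs
              (Filter.Eventually.of_forall fun y => abs_nonneg _)
      have hρlow : clow ≤ ρ x := by
        have a1 : (0:ℝ) ≤ M0 - x := by linarith
        have a2 : (0:ℝ) ≤ x - m0 := by linarith
        have a3 : (0:ℝ) ≤ M0 - μ₁ := by linarith
        have a4 : (0:ℝ) ≤ μ₁ - m0 := by linarith
        have hsq : (x - μ₁)^2 ≤ (M0 - m0)^2 := by
          nlinarith [mul_nonneg a1 a3, mul_nonneg a1 a4, mul_nonneg a2 a3, mul_nonneg a2 a4]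
        have hexp : Real.exp (-(M0 - m0)^2 / (2 * σ₁^2))
            ≤ Real.exp (-(x - μ₁)^2 / (2 * σ₁^2)) := by
          apply Real.exp_le_exp.mpr
          apply div_le_div_of_nonneg_right ?_ (by positivity)
          · linarith
        have hφ₁low : (Real.sqrt (2 * Real.pi * σ₁ ^ 2))⁻¹
            * Real.exp (-(M0 - m0)^2 / (2 * σ₁^2)) ≤ φ₁ x := by
          have : φ₁ x = (Real.sqrt (2 * Real.pi * σ₁ ^ 2))⁻¹
              * Real.exp (-(x - μ₁)^2 / (2 * σ₁^2)) := by
            simp only [hφ₁]; rw [gaussDensity]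
          rw [this]
          exact mul_le_mul_of_nonneg_left hexp (by positivity)
        have h2' : clow ≤ p * φ₁ x := by
          rw [hclow]
          exact mul_le_mul_of_nonneg_left hφ₁low hp0.le
        have h3' : (0:ℝ) ≤ (1 - p) * φ₂ x := mul_nonneg hq0.le (gd_pos hσ₂ μ₂ x).le
        simp only [hρ]; linarith
      calc |∫ y in Ioi x, f y| ≤ A := habs
        _ = (A / clow) * clow := by field_simp
        _ ≤ (A / clow) * ρ x :=
            mul_le_mul_of_nonneg_left hρlow (div_nonneg hA0 hclowpos.le)
        _ ≤ max K (A / clow) * ρ x :=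
            mul_le_mul_of_nonneg_right (le_max_right _ _) (hρpos x).le
  -- conclude
  have hABS : |(ρ x)⁻¹ * ∫ y in Ioi x, f y| ≤ max K (A / clow) := by
    rw [abs_mul, abs_inv, abs_of_pos (hρpos x)]
    rw [inv_mul_le_iff₀ (hρpos x), mul_comm]
    exact key
  exact hABS
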